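/- Let X, Y ∈ FT_n(M) with X invertible and v_M(X) > v_M(Y). Then v_M(XY) = v_M(YX) = v_M(Y). -/
import Mathlib


/-- The set `FT_n(M)`: upper triangular matrices whose diagonal entries all equal a common
element of the prime field `𝔽_p`. -/
def IsFT (p : ℕ) {n : ℕ} {M : Type*} [Field M] (X : Matrix (Fin n) (Fin n) M) : Prop :=
  (∀ i j : Fin n, j < i → X i j = 0) ∧ ∃ c : ZMod p, ∀ i : Fin n, X i i = ZMod.cast c

/-- The matrix valuation `v_M(X) = min_{i<j} v_M(x_{i,j})/(j-i)`, with values in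
`ℚ ∪ {+∞}`. -/
noncomputable def vmat {n : ℕ} {M : Type*} [Field M] (v : AddValuation M (WithTop ℤ))
    (X : Matrix (Fin n) (Fin n) M) : WithTop ℚ :=
  Finset.univ.inf fun ij : Fin n × Fin n =>
    if ij.1 < ij.2 then
      WithTop.map (fun z : ℤ => (z : ℚ) / ((ij.2 : ℚ) - (ij.1 : ℚ))) (v (X ij.1 ij.2))
    else ⊤

/-- The matrix valuation `ṽ_M(X)`: same as `v_M(X)` but omitting the `(1,n)` entry. -/
noncomputable def vtil {n : ℕ} {M : Type*} [Field M] (v : AddValuation M (WithTop ℤ))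
    (X : Matrix (Fin n) (Fin n) M) : WithTop ℚ :=
  Finset.univ.inf fun ij : Fin n × Fin n =>
    if ij.1 < ij.2 ∧ ¬((ij.1 : ℕ) = 0 ∧ (ij.2 : ℕ) = n - 1) then
      WithTop.map (fun z : ℤ => (z : ℚ) / ((ij.2 : ℚ) - (ij.1 : ℚ))) (v (X ij.1 ij.2))
    else ⊤

/-! ### Auxiliary lemmas -/

/-- The canonical map `WithTop ℤ → WithTop ℚ`. -/
noncomputable def gq : WithTop ℤ → WithTop ℚ := WithTop.map (fun z : ℤ => (z : ℚ))

@[simp] lemma gq_top : gq ⊤ = ⊤ := rfl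

@[simp] lemma gq_coe (z : ℤ) : gq (z : WithTop ℤ) = ((z : ℚ) : WithTop ℚ) := rfl

@[simp] lemma gq_zero : gq (0 : WithTop ℤ) = 0 := by
  have : ((0 : ℤ) : WithTop ℤ) = (0 : WithTop ℤ) := rfl
  rw [← this, gq_coe]; norm_num

lemma gq_le_iff {a b : WithTop ℤ} : gq a ≤ gq b ↔ a ≤ b := by
  cases a <;> cases b <;>
    simp [gq, WithTop.map_top, WithTop.map_coe]

lemma gq_lt_iff {a b : WithTop ℤ} : gq a < gq b ↔ a < b := by
  cases a <;> cases b <;>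
    simp [gq, WithTop.map_top, WithTop.map_coe]

lemma gq_mono {a b : WithTop ℤ} (h : a ≤ b) : gq a ≤ gq b := gq_le_iff.2 h

lemma gq_add (a b : WithTop ℤ) : gq (a + b) = gq a + gq b := by
  cases a <;> cases b <;>
    simp [gq, WithTop.map_top, WithTop.map_coe, ← WithTop.coe_add]

lemma le_map_div_iff {d q : ℚ} (hd : 0 < d) {a : WithTop ℤ} :
    (q : WithTop ℚ) ≤ WithTop.map (fun z : ℤ => (z : ℚ) / d) a ↔
      ((d * q : ℚ) : WithTop ℚ) ≤ gq a := by
  cases a with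
  | top => simp [gq]
  | coe z =>
      rw [WithTop.map_coe, gq_coe, WithTop.coe_le_coe, WithTop.coe_le_coe, le_div_iff₀ hd,
        mul_comm]

lemma lt_map_div_iff {d q : ℚ} (hd : 0 < d) {a : WithTop ℤ} :
    (q : WithTop ℚ) < WithTop.map (fun z : ℤ => (z : ℚ) / d) a ↔
      ((d * q : ℚ) : WithTop ℚ) < gq a := by
  cases a with
  | top =>
      rw [WithTop.map_top, gq_top]
      exact iff_of_true (WithTop.coe_lt_top q) (WithTop.coe_lt_top (d * q))
  | coe z =>
      rw [WithTop.map_coe, gq_coe, WithTop.coe_lt_coe, WithTop.coe_lt_coe, lt_div_iff₀ hd,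
        mul_comm]

lemma le_gq_v_sum {M : Type*} [Field M] (v : AddValuation M (WithTop ℤ))
    {ι : Type*} [Fintype ι] (f : ι → M) {t : WithTop ℚ}
    (h : ∀ k, t ≤ gq (v (f k))) : t ≤ gq (v (∑ k, f k)) := by
  rcases isEmpty_or_nonempty ι with hι | hι
  · rw [Finset.univ_eq_empty, Finset.sum_empty, v.map_zero]
    exact le_top
  · obtain ⟨k0, -, hk0⟩ := Finset.exists_mem_eq_inf (Finset.univ : Finset ι)
      Finset.univ_nonempty (fun k => v (f k))
    calc t ≤ gq (v (f k0)) := h k0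
      _ = gq (Finset.univ.inf fun k => v (f k)) := by rw [hk0]
      _ ≤ gq (v (∑ k, f k)) :=
          gq_mono (v.map_le_sum fun k _ => Finset.inf_le (Finset.mem_univ k))

lemma val_cast_eq_zero {p : ℕ} (hp : p.Prime) {M : Type*} [Field M] [CharP M p]
    (v : AddValuation M (WithTop ℤ)) {c : ZMod p} (hc : (ZMod.cast c : M) ≠ 0) :
    v (ZMod.cast c : M) = 0 := by
  haveI : Fact p.Prime := ⟨hp⟩
  have hc' : c ≠ 0 := by
    rintro rfl
    apply hc
    rw [← ZMod.castHom_apply (h := dvd_refl p), map_zero]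
  have key : (ZMod.cast c : M) ^ (p - 1) = 1 := by
    rw [← ZMod.castHom_apply (h := dvd_refl p), ← map_pow,
      ZMod.pow_card_sub_one_eq_one hc', map_one]
  have hpow := v.map_pow (ZMod.cast c : M) (p - 1)
  rw [key, v.map_one] at hpow
  obtain ⟨z, hz⟩ := WithTop.ne_top_iff_exists.1 (v.ne_top_iff.2 hc)
  rw [← hz, ← WithTop.coe_nsmul] at hpow
  have hz0 : (p - 1) • z = 0 := by exact_mod_cast hpow.symm
  have hp1 : p - 1 ≠ 0 := by
    have := hp.two_le; omega
  have : z = 0 := by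
    rw [nsmul_eq_mul, mul_eq_zero] at hz0
    rcases hz0 with h | h
    · exact absurd (by exact_mod_cast h) hp1
    · exact h
  rw [← hz, this]; rfl

lemma val_cast_nonneg {p : ℕ} (hp : p.Prime) {M : Type*} [Field M] [CharP M p]
    (v : AddValuation M (WithTop ℤ)) (c : ZMod p) :
    0 ≤ v (ZMod.cast c : M) := by
  by_cases hc : (ZMod.cast c : M) = 0
  · rw [hc, v.map_zero]; exact le_top
  · rw [val_cast_eq_zero hp v hc]

lemma vmat_le_entry {n : ℕ} {M : Type*} [Field M] (v : AddValuation M (WithTop ℤ))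
    (Z : Matrix (Fin n) (Fin n) M) {i j : Fin n} (hij : i < j) :
    vmat v Z ≤ WithTop.map (fun z : ℤ => (z : ℚ) / ((j : ℚ) - (i : ℚ))) (v (Z i j)) := by
  refine le_trans (Finset.inf_le (Finset.mem_univ (i, j))) ?_
  simp only [if_pos hij]
  exact le_rfl

lemma le_vmat {n : ℕ} {M : Type*} [Field M] (v : AddValuation M (WithTop ℤ))
    (Z : Matrix (Fin n) (Fin n) M) {t : WithTop ℚ}
    (h : ∀ i j : Fin n, i < j →
      t ≤ WithTop.map (fun z : ℤ => (z : ℚ) / ((j : ℚ) - (i : ℚ))) (v (Z i j))) :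
    t ≤ vmat v Z := by
  refine Finset.le_inf fun ij _ => ?_
  by_cases hij : ij.1 < ij.2
  · rw [if_pos hij]; exact h _ _ hij
  · rw [if_neg hij]; exact le_top

lemma exists_vmat_witness {n : ℕ} {M : Type*} [Field M] (v : AddValuation M (WithTop ℤ))
    (Z : Matrix (Fin n) (Fin n) M) (h : vmat v Z ≠ ⊤) :
    ∃ i j : Fin n, i < j ∧
      WithTop.map (fun z : ℤ => (z : ℚ) / ((j : ℚ) - (i : ℚ))) (v (Z i j)) = vmat v Z := by
  classical
  have hne : (Finset.univ : Finset (Fin n × Fin n)).Nonempty := by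
    rcases (Finset.univ : Finset (Fin n × Fin n)).eq_empty_or_nonempty with he | hne
    · exact absurd (by rw [vmat, he, Finset.inf_empty]) h
    · exact hne
  obtain ⟨ij, -, hij⟩ := Finset.exists_mem_eq_inf (Finset.univ : Finset (Fin n × Fin n)) hne
    (fun ij : Fin n × Fin n =>
      if ij.1 < ij.2 then
        WithTop.map (fun z : ℤ => (z : ℚ) / ((ij.2 : ℚ) - (ij.1 : ℚ))) (v (Z ij.1 ij.2))
      else ⊤)
  by_cases hlt : ij.1 < ij.2
  · refine ⟨ij.1, ij.2, hlt, ?_⟩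
    rw [vmat, hij, if_pos hlt]
  · exact absurd (by rw [vmat, hij, if_neg hlt]) h

lemma fin_cast_sub_pos {n : ℕ} {a b : Fin n} (h : a < b) : (0 : ℚ) < (b : ℚ) - (a : ℚ) := by
  have : (a : ℚ) < (b : ℚ) := by exact_mod_cast h
  linarith

/-- For `X, Y ∈ FT_n(M)` with `X` invertible and `v_M(X) > v_M(Y)`,
`v_M(XY) = v_M(YX) = v_M(Y)`. -/
theorem vmat_mul_of_invertible {p n : ℕ} (hp : p.Prime) {M : Type*} [Field M] [CharP M p]
    (v : AddValuation M (WithTop ℤ)) (X Y : Matrix (Fin n) (Fin n) M)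
    (hX : IsFT p X) (hY : IsFT p Y) (hXu : IsUnit X) (hv : vmat v Y < vmat v X) :
    vmat v (X * Y) = vmat v Y ∧ vmat v (Y * X) = vmat v Y := by
  classical
  obtain ⟨hXlow, c, hcd⟩ := hX
  obtain ⟨hYlow, c', hc'd⟩ := hY
  have hYne : vmat v Y ≠ ⊤ := (hv.trans_le le_top).ne
  obtain ⟨q, hq⟩ := WithTop.ne_top_iff_exists.1 hYne
  obtain ⟨i, j, hijlt, hwit⟩ := exists_vmat_witness v Y hYne
  have hn : 0 < n := i.pos
  -- the common diagonal entry of X is nonzero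
  have hXdiag_ne : (ZMod.cast c : M) ≠ 0 := by
    intro h0
    have hdetX : IsUnit X.det := (Matrix.isUnit_iff_isUnit_det X).1 hXu
    have hBT : X.BlockTriangular id := fun a b hab => hXlow a b hab
    rw [Matrix.det_of_upperTriangular hBT] at hdetX
    have : (∏ a : Fin n, X a a) = 0 := by
      refine Finset.prod_eq_zero (Finset.mem_univ (⟨0, hn⟩ : Fin n)) ?_
      rw [hcd, h0]
    rw [this] at hdetX
    exact not_isUnit_zero hdetX
  have hvXdiag : ∀ a : Fin n, v (X a a) = 0 := fun a => by
    rw [hcd a]; exact val_cast_eq_zero hp v hXdiag_ne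
  have hvYdiag : ∀ a : Fin n, 0 ≤ v (Y a a) := fun a => by
    rw [hc'd a]; exact val_cast_nonneg hp v c'
  -- entrywise bounds coming from `vmat`
  have hYb : ∀ a b : Fin n, a ≤ b →
      ((((b : ℚ) - (a : ℚ)) * q : ℚ) : WithTop ℚ) ≤ gq (v (Y a b)) := by
    intro a b hab
    rcases eq_or_lt_of_le hab with rfl | hab
    · have h0 : (((a : ℚ) - (a : ℚ)) * q : ℚ) = 0 := by ring
      rw [h0]
      calc ((0 : ℚ) : WithTop ℚ) = gq 0 := by rw [gq_zero]; norm_num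
        _ ≤ gq (v (Y a a)) := gq_mono (hvYdiag a)
    · have hd := fin_cast_sub_pos hab
      have h1 : (q : WithTop ℚ) ≤
          WithTop.map (fun z : ℤ => (z : ℚ) / ((b : ℚ) - (a : ℚ))) (v (Y a b)) := by
        rw [hq]; exact vmat_le_entry v Y hab
      exact (le_map_div_iff hd).1 h1
  have hXbs : ∀ a b : Fin n, a < b →
      ((((b : ℚ) - (a : ℚ)) * q : ℚ) : WithTop ℚ) < gq (v (X a b)) := by
    intro a b hab
    have hd := fin_cast_sub_pos hab
    have h1 : (q : WithTop ℚ) <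
        WithTop.map (fun z : ℤ => (z : ℚ) / ((b : ℚ) - (a : ℚ))) (v (X a b)) := by
      refine lt_of_lt_of_le ?_ (vmat_le_entry v X hab)
      rw [hq]; exact hv
    exact (lt_map_div_iff hd).1 h1
  have hXb : ∀ a b : Fin n, a ≤ b →
      ((((b : ℚ) - (a : ℚ)) * q : ℚ) : WithTop ℚ) ≤ gq (v (X a b)) := by
    intro a b hab
    rcases eq_or_lt_of_le hab with rfl | hab
    · have h0 : (((a : ℚ) - (a : ℚ)) * q : ℚ) = 0 := by ring
      rw [h0, hvXdiag a, gq_zero]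
      norm_num
    · exact (hXbs a b hab).le
  -- lower bound for the entries of `X * Y`
  have hXYent : ∀ a b : Fin n, a < b →
      ((((b : ℚ) - (a : ℚ)) * q : ℚ) : WithTop ℚ) ≤ gq (v ((X * Y) a b)) := by
    intro a b hab
    rw [Matrix.mul_apply]
    refine le_gq_v_sum v _ fun k => ?_
    by_cases hka : k < a
    · rw [hXlow a k hka, zero_mul, v.map_zero, gq_top]; exact le_top
    · by_cases hbk : b < k
      · rw [hYlow k b hbk, mul_zero, v.map_zero, gq_top]; exact le_top
      · have hak : a ≤ k := not_lt.1 hka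
        have hkb : k ≤ b := not_lt.1 hbk
        rw [v.map_mul, gq_add]
        have heq : (((b : ℚ) - (a : ℚ)) * q : ℚ) =
            (((k : ℚ) - (a : ℚ)) * q) + (((b : ℚ) - (k : ℚ)) * q) := by ring
        rw [heq, WithTop.coe_add]
        exact add_le_add (hXb a k hak) (hYb k b hkb)
  -- lower bound for the entries of `Y * X`
  have hYXent : ∀ a b : Fin n, a < b →
      ((((b : ℚ) - (a : ℚ)) * q : ℚ) : WithTop ℚ) ≤ gq (v ((Y * X) a b)) := by
    intro a b hab
    rw [Matrix.mul_apply]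
    refine le_gq_v_sum v _ fun k => ?_
    by_cases hka : k < a
    · rw [hYlow a k hka, zero_mul, v.map_zero, gq_top]; exact le_top
    · by_cases hbk : b < k
      · rw [hXlow k b hbk, mul_zero, v.map_zero, gq_top]; exact le_top
      · have hak : a ≤ k := not_lt.1 hka
        have hkb : k ≤ b := not_lt.1 hbk
        rw [v.map_mul, gq_add]
        have heq : (((b : ℚ) - (a : ℚ)) * q : ℚ) =
            (((k : ℚ) - (a : ℚ)) * q) + (((b : ℚ) - (k : ℚ)) * q) := by ring
        rw [heq, WithTop.coe_add]
        exact add_le_add (hYb a k hak) (hXb k b hkb)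
  -- the witness entry of `Y`
  have hd : (0 : ℚ) < (j : ℚ) - (i : ℚ) := fin_cast_sub_pos hijlt
  have hYij_ne : v (Y i j) ≠ ⊤ := by
    intro h0
    rw [h0, WithTop.map_top, ← hq] at hwit
    exact (WithTop.coe_ne_top (a := q)) hwit.symm
  obtain ⟨z, hz⟩ := WithTop.ne_top_iff_exists.1 hYij_ne
  have hzq : (z : ℚ) = ((j : ℚ) - (i : ℚ)) * q := by
    rw [← hz, WithTop.map_coe, ← hq] at hwit
    have hdiv : (z : ℚ) / ((j : ℚ) - (i : ℚ)) = q := WithTop.coe_inj.1 hwit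
    field_simp at hdiv
    linarith [hdiv]
  -- the `(i,j)` entry of `X * Y` has valuation `z`
  have hmainXY : v (X i i * Y i j) = (z : WithTop ℤ) := by
    rw [v.map_mul, hvXdiag i, zero_add, hz]
  have hXYij : v ((X * Y) i j) = (z : WithTop ℤ) := by
    rw [Matrix.mul_apply, ← Finset.add_sum_erase _ _ (Finset.mem_univ i)]
    have hrest : ((z : WithTop ℤ)) <
        v (∑ k ∈ Finset.univ.erase i, X i k * Y k j) := by
      refine v.map_lt_sum WithTop.coe_ne_top fun k hk => ?_
      have hki : k ≠ i := Finset.ne_of_mem_erase hk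
      rw [← gq_lt_iff, gq_coe, hzq]
      rcases hki.lt_or_gt with hk1 | hk1
      · rw [hXlow i k hk1, zero_mul, v.map_zero, gq_top]
        exact WithTop.coe_lt_top _
      · by_cases hkj : j < k
        · rw [hYlow k j hkj, mul_zero, v.map_zero, gq_top]
          exact WithTop.coe_lt_top _
        · have hkj' : k ≤ j := not_lt.1 hkj
          rw [v.map_mul, gq_add]
          have heq : (((j : ℚ) - (i : ℚ)) * q : ℚ) =
              (((k : ℚ) - (i : ℚ)) * q) + (((j : ℚ) - (k : ℚ)) * q) := by ring
          rw [heq, WithTop.coe_add]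
          exact WithTop.add_lt_add_of_lt_of_le WithTop.coe_ne_top (hXbs i k hk1) (hYb k j hkj')
    rw [v.map_add_eq_of_lt_left (by rw [hmainXY]; exact hrest), hmainXY]
  -- the `(i,j)` entry of `Y * X` has valuation `z`
  have hmainYX : v (Y i j * X j j) = (z : WithTop ℤ) := by
    rw [v.map_mul, hvXdiag j, add_zero, hz]
  have hYXij : v ((Y * X) i j) = (z : WithTop ℤ) := by
    rw [Matrix.mul_apply, ← Finset.add_sum_erase _ _ (Finset.mem_univ j)]
    have hrest : ((z : WithTop ℤ)) <
        v (∑ k ∈ Finset.univ.erase j, Y i k * X k j) := by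
      refine v.map_lt_sum WithTop.coe_ne_top fun k hk => ?_
      have hkj : k ≠ j := Finset.ne_of_mem_erase hk
      rw [← gq_lt_iff, gq_coe, hzq]
      rcases hkj.lt_or_gt with hk1 | hk1
      · -- k < j
        rcases lt_trichotomy k i with hki | hki | hki
        · rw [hYlow i k hki, zero_mul, v.map_zero, gq_top]
          exact WithTop.coe_lt_top _
        · subst hki
          rw [v.map_mul, gq_add]
          have heq : (((j : ℚ) - (k : ℚ)) * q : ℚ) =
              0 + (((j : ℚ) - (k : ℚ)) * q) := by ring
          rw [heq, WithTop.coe_add]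
          refine WithTop.add_lt_add_of_le_of_lt WithTop.coe_ne_top ?_ (hXbs k j hk1)
          calc ((0 : ℚ) : WithTop ℚ) = gq 0 := by rw [gq_zero]; norm_num
            _ ≤ gq (v (Y k k)) := gq_mono (hvYdiag k)
        · rw [v.map_mul, gq_add]
          have heq : (((j : ℚ) - (i : ℚ)) * q : ℚ) =
              (((k : ℚ) - (i : ℚ)) * q) + (((j : ℚ) - (k : ℚ)) * q) := by ring
          rw [heq, WithTop.coe_add]
          exact WithTop.add_lt_add_of_le_of_lt WithTop.coe_ne_top (hYb i k hki.le) (hXbs k j hk1)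
      · -- j < k
        rw [hXlow k j hk1, mul_zero, v.map_zero, gq_top]
        exact WithTop.coe_lt_top _
    rw [v.map_add_eq_of_lt_left (by rw [hmainYX]; exact hrest), hmainYX]
  -- conclude
  have hupXY : vmat v (X * Y) ≤ (q : WithTop ℚ) := by
    refine le_trans (vmat_le_entry v (X * Y) hijlt) ?_
    rw [hXYij, WithTop.map_coe, hzq, mul_div_cancel_left₀ q hd.ne']
  have hupYX : vmat v (Y * X) ≤ (q : WithTop ℚ) := by
    refine le_trans (vmat_le_entry v (Y * X) hijlt) ?_
    rw [hYXij, WithTop.map_coe, hzq, mul_div_cancel_left₀ q hd.ne']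
  have hloXY : (q : WithTop ℚ) ≤ vmat v (X * Y) := by
    refine le_vmat v _ fun a b hab => ?_
    exact (le_map_div_iff (fin_cast_sub_pos hab)).2 (hXYent a b hab)
  have hloYX : (q : WithTop ℚ) ≤ vmat v (Y * X) := by
    refine le_vmat v _ fun a b hab => ?_
    exact (le_map_div_iff (fin_cast_sub_pos hab)).2 (hYXent a b hab)
  constructor
  · rw [← hq]; exact le_antisymm hupXY hloXY
  · rw [← hq]; exact le_antisymm hupYX hloYX
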